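/- For every finite complete bipartite graph G with both parts nonempty and every spanning edge-coloring of G with 2 colors, the vertex set of G can be covered by at most 2 monochromatic connected components. -/
import Mathlib


/-- In a bipartite graph with side-assignment `side` and edge-coloring `χ`,
`u` and `v` lie in the same monochromatic component of color `c`:
they are joined by a (possibly empty) walk of edges of color `c`. -/
def SameCompBip {V K : Type*} (side : V → Bool) (χ : V → V → K)
    (c : K) (u v : V) : Prop :=
  Relation.ReflTransGen (fun a b => side a ≠ side b ∧ χ a b = c) u v

lemma fin2cases : ∀ a : Fin 2, a = 0 ∨ a = 1 := by decide

lemma fin2ne : ∀ a b : Fin 2, a ≠ b → a ≠ 0 → b = 0 := by decide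

/-- Every spanning 2-edge-coloring of a complete bipartite graph admits a cover of
its vertex set by at most 2 monochromatic components. -/
theorem cov_two_colors (V : Type*) [Fintype V] (side : V → Bool)
    (hX : ∃ v, side v = true) (hY : ∃ v, side v = false)
    (χ : V → V → Fin 2) (hsym : ∀ u v, χ u v = χ v u)
    (hspan : ∀ (v : V) (c : Fin 2), ∃ w, side w ≠ side v ∧ χ v w = c) :
    ∃ S : Finset (Fin 2 × V), S.card ≤ 2 ∧
      ∀ u : V, ∃ q ∈ S, SameCompBip side χ q.1 u q.2 := by
  classical
  obtain ⟨x, hx⟩ := hX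
  by_cases hA : ∃ x', side x' = true ∧ ∀ y, side y = false → χ x' y ≠ χ x y
  · obtain ⟨x', hx', hopp⟩ := hA
    refine ⟨{(0, x), (0, x')}, (Finset.card_insert_le _ _).trans (by simp), ?_⟩
    have key : ∀ y, side y = false →
        SameCompBip side χ 0 y x ∨ SameCompBip side χ 0 y x' := by
      intro y hy
      by_cases h0 : χ x y = 0
      · exact Or.inl (Relation.ReflTransGen.single
          ⟨by simp [hy, hx], by rw [hsym]; exact h0⟩)
      · have h1 : χ x' y = 0 := fin2ne (χ x y) (χ x' y) (Ne.symm (hopp y hy)) h0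
        exact Or.inr (Relation.ReflTransGen.single
          ⟨by simp [hy, hx'], by rw [hsym]; exact h1⟩)
    intro u
    by_cases hu : side u = false
    · rcases key u hu with h | h
      · exact ⟨(0, x), by simp, h⟩
      · exact ⟨(0, x'), by simp, h⟩
    · have hu' : side u = true := by
        cases h : side u with
        | false => exact absurd h hu
        | true => rfl
      obtain ⟨w, hw, hcw⟩ := hspan u 0
      have hwf : side w = false := by
        rw [hu'] at hw
        cases h : side w with
        | false => rfl
        | true => exact absurd h hw
      rcases key w hwf with h | h
      · exact ⟨(0, x), by simp,
          Relation.ReflTransGen.head ⟨by simp [hu', hwf], hcw⟩ h⟩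
      · exact ⟨(0, x'), by simp,
          Relation.ReflTransGen.head ⟨by simp [hu', hwf], hcw⟩ h⟩
  · push_neg at hA
    refine ⟨{(0, x), (1, x)}, (Finset.card_insert_le _ _).trans (by simp), ?_⟩
    intro u
    by_cases hu : side u = false
    · refine ⟨(χ x u, x), ?_, Relation.ReflTransGen.single
        ⟨by simp [hu, hx], by rw [hsym]⟩⟩
      rcases fin2cases (χ x u) with h | h <;> simp [h]
    · have hu' : side u = true := by
        cases h : side u with
        | false => exact absurd h hu
        | true => rfl
      obtain ⟨y, hy, hxy⟩ := hA u hu'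
      refine ⟨(χ x y, x), ?_, ?_⟩
      · rcases fin2cases (χ x y) with h | h <;> simp [h]
      · exact Relation.ReflTransGen.head ⟨by simp [hu', hy], hxy⟩
          (Relation.ReflTransGen.single ⟨by simp [hy, hx], hsym y x⟩)
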